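/- Let f be a function from datasets (multisets of records from X) to ℝ^k (functions Fin k → ℝ), let D be a fixed dataset, let ε > 0, and let b > 0 satisfy ‖f(y) − f(D)‖₁ ≤ ε·b for every dataset y that is a neighbor of D (so that b is at least LS_f(D)/ε, where LS_f(D) is the local sensitivity of f at D). Let μ_b be the Laplace(0, b) measure on ℝ, i.e., the measure with density x ↦ (1/(2b))·exp(−|x|/b) with respect to Lebesgue measure, and let ν be the product measure on Fin k → ℝ whose coordinates are i.i.d. μ_b. Define the mechanism κ(D') = ν.map (z ↦ f(D') + z). Then κ satisfies ε-individual differential privacy at D: for every neighbor dataset D' of D and every measurable S ⊆ ℝ^k, exp(−ε)·κ(D')(S) ≤ κ(D)(S) ≤ exp(ε)·κ(D')(S). -/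

import Mathlib

open MeasureTheory Real

/-- Two datasets (multisets of records) are neighbors if one is obtained from the
other by replacing one record. -/
def Neighbor {X : Type*} [DecidableEq X] (D₁ D₂ : Multiset X) : Prop :=
  ∃ a ∈ D₁, ∃ b : X, D₂ = D₁.erase a + {b}

/-- The Laplace(0, b) measure on ℝ: density `x ↦ (1/(2b)) · exp(−|x|/b)` with
respect to Lebesgue measure. -/
noncomputable def laplaceMeasure (b : ℝ) : Measure ℝ :=
  MeasureTheory.volume.withDensity
    (fun x => ENNReal.ofReal ((1 / (2 * b)) * Real.exp (-|x| / b)))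

lemma lintegral_pi_prod : ∀ {n : ℕ} (μ : Measure ℝ) [SigmaFinite μ]
    (g : Fin n → ℝ → ENNReal), (∀ i, Measurable (g i)) →
    ∫⁻ x : Fin n → ℝ, ∏ i, g i (x i) ∂(Measure.pi fun _ => μ) = ∏ i, ∫⁻ y, g i y ∂μ := by
  intro n
  induction n with
  | zero => intro μ _ g hg; simp [Measure.pi_of_empty]
  | succ n ih =>
    intro μ _ g hg
    have hmp := (measurePreserving_piFinSuccAbove (fun _ : Fin (n + 1) => μ) 0).symm
    rw [← hmp.lintegral_comp_emb (MeasurableEquiv.measurableEmbedding _)]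
    simp_rw [MeasurableEquiv.piFinSuccAbove_symm_apply, Fin.insertNthEquiv,
      Fin.prod_univ_succ, Fin.insertNth_zero, Equiv.coe_fn_mk]
    simp only [Fin.zero_succAbove, cast_eq, Function.comp_def, Fin.cons_zero, Fin.cons_succ]
    have hm : Measurable fun (y : Fin n → ℝ) => ∏ x : Fin n, g x.succ (y x) :=
      Finset.measurable_prod Finset.univ fun (i : Fin n) _ =>
        (hg i.succ).comp (measurable_pi_apply i)
    rw [lintegral_prod_mul (hg 0).aemeasurable hm.aemeasurable,
      ih μ (fun i => g i.succ) (fun i => hg i.succ)]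

instance laplaceMeasure.sigmaFinite (b : ℝ) : SigmaFinite (laplaceMeasure b) := by
  unfold laplaceMeasure; infer_instance

lemma gmeas (b : ℝ) : Measurable fun x : ℝ => ENNReal.ofReal ((1 / (2 * b)) * Real.exp (-|x| / b)) := by
  fun_prop

lemma pi_laplace_eq (b : ℝ) {k : ℕ} :
    (Measure.pi fun _ : Fin k => laplaceMeasure b) =
      (volume : Measure (Fin k → ℝ)).withDensity
        (fun x => ∏ i, ENNReal.ofReal ((1 / (2 * b)) * Real.exp (-|x i| / b))) := by
  refine Measure.pi_eq fun s hs => ?_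
  rw [withDensity_apply _ (MeasurableSet.univ_pi hs), volume_pi]
  have : ∀ x : Fin k → ℝ,
      (Set.pi Set.univ s).indicator
        (fun x : Fin k → ℝ => ∏ i, ENNReal.ofReal ((1 / (2 * b)) * Real.exp (-|x i| / b))) x
      = ∏ i, (s i).indicator (fun y => ENNReal.ofReal ((1 / (2 * b)) * Real.exp (-|y| / b))) (x i) := by
    intro x
    by_cases hx : x ∈ Set.pi Set.univ s
    · rw [Set.indicator_of_mem hx]
      exact Finset.prod_congr rfl fun i _ =>
        (Set.indicator_of_mem (hx i (Set.mem_univ i))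
          (fun y => ENNReal.ofReal ((1 / (2 * b)) * Real.exp (-|y| / b)))).symm
    · rw [Set.indicator_of_notMem hx]
      have : ∃ i : Fin k, x i ∉ s i := by
        by_contra h
        push_neg at h
        exact hx fun i _ => h i
      obtain ⟨i, hi⟩ := this
      exact (Finset.prod_eq_zero (Finset.mem_univ i)
        (Set.indicator_of_notMem hi _)).symm
  rw [← lintegral_indicator (MeasurableSet.univ_pi hs)]
  simp_rw [this]
  rw [lintegral_pi_prod volume
    (fun i => (s i).indicator fun y => ENNReal.ofReal ((1 / (2 * b)) * Real.exp (-|y| / b)))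
    (fun i => (gmeas b).indicator (hs i))]
  refine Finset.prod_congr rfl fun i _ => ?_
  rw [lintegral_indicator (hs i), laplaceMeasure, withDensity_apply _ (hs i)]

lemma g_shift_le {b : ℝ} (hb : 0 < b) (τ y : ℝ) :
    (1 / (2 * b)) * Real.exp (-|y - τ| / b)
      ≤ Real.exp (|τ| / b) * ((1 / (2 * b)) * Real.exp (-|y| / b)) := by
  rw [mul_comm (Real.exp (|τ| / b)), mul_assoc, ← Real.exp_add]
  have h1 : (0:ℝ) < 1 / (2 * b) := by positivity
  refine mul_le_mul_of_nonneg_left (Real.exp_le_exp.mpr ?_) h1.le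
  rw [← add_div, div_le_div_iff_of_pos_right hb]
  have := abs_sub_abs_le_abs_sub y (y - τ)
  simp only [sub_sub_cancel] at this
  linarith

lemma Gmeas (b : ℝ) {k : ℕ} :
    Measurable fun x : Fin k → ℝ => ∏ i, ENNReal.ofReal ((1 / (2 * b)) * Real.exp (-|x i| / b)) :=
  Finset.measurable_prod Finset.univ fun i _ => (gmeas b).comp (measurable_pi_apply i)

lemma shift_bound {b : ℝ} (hb : 0 < b) {k : ℕ} (t : Fin k → ℝ)
    (A : Set (Fin k → ℝ)) (hA : MeasurableSet A) :
    (Measure.pi fun _ : Fin k => laplaceMeasure b) ((fun z => z + t) ⁻¹' A)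
      ≤ ENNReal.ofReal (Real.exp ((∑ i, |t i|) / b)) *
        (Measure.pi fun _ : Fin k => laplaceMeasure b) A := by
  have hmt : Measurable fun z : Fin k → ℝ => z + t := measurable_id.add_const t
  rw [pi_laplace_eq, withDensity_apply _ (hmt hA), withDensity_apply _ hA]
  have hmap : Measure.map (fun z : Fin k → ℝ => z + t) volume = volume :=
    map_add_right_eq_self volume t
  have key : (∫⁻ x in (fun z : Fin k → ℝ => z + t) ⁻¹' A,
        ∏ i, ENNReal.ofReal ((1 / (2 * b)) * Real.exp (-|x i| / b)) ∂volume)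
      = ∫⁻ y in A, ∏ i, ENNReal.ofReal ((1 / (2 * b)) * Real.exp (-|y i - t i| / b)) ∂volume := by
    have hf : Measurable fun y : Fin k → ℝ =>
        ∏ i, ENNReal.ofReal ((1 / (2 * b)) * Real.exp (-|y i - t i| / b)) :=
      (Gmeas b).comp (measurable_id.sub_const t)
    conv_rhs => rw [← hmap]
    rw [setLIntegral_map hA hf hmt]
    simp
  rw [key, ← lintegral_const_mul _ (Gmeas b)]
  refine setLIntegral_mono' hA fun y _ => ?_
  calc (∏ i, ENNReal.ofReal ((1 / (2 * b)) * Real.exp (-|y i - t i| / b)))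
      ≤ ∏ i, ENNReal.ofReal (Real.exp (|t i| / b) *
          ((1 / (2 * b)) * Real.exp (-|y i| / b))) :=
        Finset.prod_le_prod' fun i _ => ENNReal.ofReal_le_ofReal (g_shift_le hb (t i) (y i))
    _ = ∏ i, (ENNReal.ofReal (Real.exp (|t i| / b)) *
          ENNReal.ofReal ((1 / (2 * b)) * Real.exp (-|y i| / b))) := by
        refine Finset.prod_congr rfl fun i _ => ?_
        rw [ENNReal.ofReal_mul (Real.exp_nonneg _)]
    _ = (∏ i, ENNReal.ofReal (Real.exp (|t i| / b))) *
          ∏ i, ENNReal.ofReal ((1 / (2 * b)) * Real.exp (-|y i| / b)) := by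
        rw [Finset.prod_mul_distrib]
    _ = ENNReal.ofReal (Real.exp ((∑ i, |t i|) / b)) *
          ∏ i, ENNReal.ofReal ((1 / (2 * b)) * Real.exp (-|y i| / b)) := by
        congr 1
        rw [← ENNReal.ofReal_prod_of_nonneg (fun i _ => (Real.exp_nonneg _))]
        congr 1
        rw [← Real.exp_sum]
        congr 1
        rw [Finset.sum_div]


lemma map_shift_le {b ε : ℝ} (hb : 0 < b) {k : ℕ} (c d : Fin k → ℝ)
    (h : (∑ i, |c i - d i|) ≤ ε * b) (S : Set (Fin k → ℝ)) (hS : MeasurableSet S) :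
    (Measure.pi fun _ : Fin k => laplaceMeasure b) ((fun z => c + z) ⁻¹' S)
      ≤ ENNReal.ofReal (Real.exp ε) *
        (Measure.pi fun _ : Fin k => laplaceMeasure b) ((fun z => d + z) ⁻¹' S) := by
  have hset : (fun z : Fin k → ℝ => c + z) ⁻¹' S
      = (fun z => z + (c - d)) ⁻¹' ((fun z => d + z) ⁻¹' S) := by
    ext z
    simp only [Set.mem_preimage]
    have : d + (z + (c - d)) = c + z := by abel
    rw [this]
  rw [hset]
  refine le_trans (shift_bound hb (c - d) _ ((measurable_const_add d) hS)) ?_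
  refine mul_le_mul_left (ENNReal.ofReal_le_ofReal (Real.exp_le_exp.mpr ?_)) _
  rw [div_le_iff₀ hb]
  simpa using h

/-- The Laplace mechanism with i.i.d. `Laplace(0, b)` noise on each of the `k`
coordinates, calibrated to the local sensitivity of `f` at `D` (i.e. `b` such
that `‖f(y) − f(D)‖₁ ≤ ε·b` for every neighbor `y` of `D`), satisfies
`ε`-individual differential privacy at `D`. -/
theorem laplace_mechanism_iDP {X : Type*} [DecidableEq X] {k : ℕ}
    (f : Multiset X → (Fin k → ℝ)) (D : Multiset X)
    (ε b : ℝ) (hε : 0 < ε) (hb : 0 < b)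
    (hsens : ∀ y : Multiset X, Neighbor D y → (∑ i, |f y i - f D i|) ≤ ε * b)
    (κ : Multiset X → Measure (Fin k → ℝ))
    (hκ : ∀ D' : Multiset X,
      κ D' = (Measure.pi fun _ : Fin k => laplaceMeasure b).map (fun z => f D' + z)) :
    ∀ D' : Multiset X, Neighbor D D' → ∀ S : Set (Fin k → ℝ), MeasurableSet S →
      ENNReal.ofReal (Real.exp (-ε)) * κ D' S ≤ κ D S ∧
        κ D S ≤ ENNReal.ofReal (Real.exp ε) * κ D' S := by
  intro D' hD' S hS
  have happ : ∀ E : Multiset X, κ E S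
      = (Measure.pi fun _ : Fin k => laplaceMeasure b) ((fun z => f E + z) ⁻¹' S) := by
    intro E
    rw [hκ E, Measure.map_apply (measurable_const_add (f E)) hS]
  have hsum' : (∑ i, |f D' i - f D i|) ≤ ε * b := hsens D' hD'
  have hsum : (∑ i, |f D i - f D' i|) ≤ ε * b := by
    calc (∑ i, |f D i - f D' i|) = ∑ i, |f D' i - f D i| :=
          Finset.sum_congr rfl fun i _ => abs_sub_comm _ _
      _ ≤ ε * b := hsum'
  have h1 : κ D S ≤ ENNReal.ofReal (Real.exp ε) * κ D' S := by
    rw [happ D, happ D']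
    exact map_shift_le hb (f D) (f D') hsum S hS
  have h2 : κ D' S ≤ ENNReal.ofReal (Real.exp ε) * κ D S := by
    rw [happ D, happ D']
    exact map_shift_le hb (f D') (f D) hsum' S hS
  refine ⟨?_, h1⟩
  calc ENNReal.ofReal (Real.exp (-ε)) * κ D' S
      ≤ ENNReal.ofReal (Real.exp (-ε)) * (ENNReal.ofReal (Real.exp ε) * κ D S) :=
        mul_le_mul_right h2 _
    _ = κ D S := by
        rw [← mul_assoc, ← ENNReal.ofReal_mul (Real.exp_nonneg _), ← Real.exp_add]
        simp
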